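/- Let R be a commutative ring with unity, G = ⟨x | x^n = 1⟩ a cyclic group of order n, and σ, τ the R-algebra endomorphisms of RG with σ(x) = x^u and τ(x) = x^{u+v}, where u, v ∈ {0, 1, …, n−1}. Let D : RG → RG be an R-linear map with D(1) = 0 satisfying D(x^k) = (Σ_{i+j=k−1, i,j ≥ 0} σ(x)^i τ(x)^j)·D(x) for every k ∈ {1, 2, …, n−1}. Then D is a (σ,τ)-derivation of RG if and only if (Σ_{i=0}^{n−1} x^{iv})·D(x) = 0 in RG. -/

import Mathlib

/-- The generator `x` of the cyclic group of order `n`, viewed inside the group ring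
`R[Multiplicative (ZMod n)]`. -/
noncomputable def xgen (R : Type*) [CommRing R] (n : ℕ) :
    MonoidAlgebra R (Multiplicative (ZMod n)) :=
  MonoidAlgebra.of R (Multiplicative (ZMod n)) (Multiplicative.ofAdd (1 : ZMod n))

section Aux

variable {R : Type*} [CommRing R] (n u v : ℕ)

private theorem xgen_pow (k : ℕ) :
    xgen R n ^ k = MonoidAlgebra.single (Multiplicative.ofAdd ((k : ZMod n))) (1 : R) := by
  induction k with
  | zero => simp [MonoidAlgebra.one_def]
  | succ k ih =>
    rw [pow_succ, ih, xgen, MonoidAlgebra.of_apply, MonoidAlgebra.single_mul_single, mul_one]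
    congr 1
    push_cast
    rw [← ofAdd_add]

private theorem xgen_pow_n [NeZero n] : (xgen R n) ^ n = (1 : MonoidAlgebra R (Multiplicative (ZMod n))) := by
  rw [xgen_pow]
  simp [MonoidAlgebra.one_def]

/-- geometric sum -/
private noncomputable def Pgeo (k : ℕ) : MonoidAlgebra R (Multiplicative (ZMod n)) :=
  ∑ j ∈ Finset.range k, xgen R n ^ (v * j)

private noncomputable def Fc (k : ℕ) : MonoidAlgebra R (Multiplicative (ZMod n)) :=
  xgen R n ^ (u * (k - 1)) * Pgeo n v k

private theorem Pgeo_add (a b : ℕ) :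
    (Pgeo n v (a + b) : MonoidAlgebra R (Multiplicative (ZMod n))) =
      Pgeo n v a + xgen R n ^ (v * a) * Pgeo n v b := by
  unfold Pgeo
  rw [Finset.sum_range_add, Finset.mul_sum]
  congr 1
  refine Finset.sum_congr rfl fun j _ => ?_
  rw [← pow_add]
  congr 1
  ring

private theorem antid (m : ℕ) :
    (∑ p ∈ Finset.HasAntidiagonal.antidiagonal m, (xgen R n ^ u) ^ p.1 * (xgen R n ^ (u + v)) ^ p.2) =
      Fc n u v (m + 1) := by
  rw [Finset.Nat.sum_antidiagonal_eq_sum_range_succ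
    (fun i j => (xgen R n ^ u) ^ i * (xgen R n ^ (u + v)) ^ j) m]
  unfold Fc Pgeo
  rw [Nat.add_sub_cancel, ← Finset.sum_range_reflect (fun j => xgen R n ^ (v * j)) (m + 1),
    Finset.mul_sum]
  refine Finset.sum_congr rfl fun j hj => ?_
  have hj' : j ≤ m := Nat.lt_succ_iff.mp (Finset.mem_range.mp hj)
  obtain ⟨t, rfl⟩ := Nat.exists_eq_add_of_le hj'
  rw [← pow_mul, ← pow_mul, ← pow_add, ← pow_add]
  congr 1
  simp only [Nat.add_sub_cancel_left, Nat.add_sub_cancel]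
  ring

private theorem cocycle (a b : ℕ) :
    (Fc n u v (a + b) : MonoidAlgebra R (Multiplicative (ZMod n))) =
      Fc n u v a * xgen R n ^ ((u + v) * b) + xgen R n ^ (u * a) * Fc n u v b := by
  rcases Nat.eq_zero_or_pos a with rfl | ha
  · simp [Fc, Pgeo]
  rcases Nat.eq_zero_or_pos b with rfl | hb
  · simp [Fc, Pgeo]
  obtain ⟨a', rfl⟩ := Nat.exists_eq_add_of_lt ha
  obtain ⟨b', rfl⟩ := Nat.exists_eq_add_of_lt hb
  simp only [zero_add, Fc]
  have hs : a' + 1 + (b' + 1) = (b' + 1) + (a' + 1) := by ring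
  have hs1 : (b' + 1) + (a' + 1) - 1 = a' + b' + 1 := by omega
  have hs2 : a' + 1 - 1 = a' := by omega
  have hs3 : b' + 1 - 1 = b' := by omega
  rw [hs, Pgeo_add, hs1, hs2, hs3]
  set PA : MonoidAlgebra R (Multiplicative (ZMod n)) := Pgeo n v (a' + 1) with hPA
  set PB : MonoidAlgebra R (Multiplicative (ZMod n)) := Pgeo n v (b' + 1) with hPB
  rw [mul_add]
  have e1 : (xgen R n : MonoidAlgebra R (Multiplicative (ZMod n))) ^ (u * (a' + b' + 1)) *
      (xgen R n ^ (v * (b' + 1)) * PA) = xgen R n ^ (u * a') * PA * xgen R n ^ ((u + v) * (b' + 1)) := by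
    rw [← mul_assoc, ← pow_add]
    have : u * (a' + b' + 1) + v * (b' + 1) = u * a' + (u + v) * (b' + 1) := by ring
    rw [this, pow_add]
    ring
  have e2 : (xgen R n : MonoidAlgebra R (Multiplicative (ZMod n))) ^ (u * (a' + b' + 1)) * PB =
      xgen R n ^ (u * (a' + 1)) * (xgen R n ^ (u * b') * PB) := by
    rw [← mul_assoc, ← pow_add]
    have : u * (a' + b' + 1) = u * (a' + 1) + u * b' := by ring
    rw [this]
  rw [e1, e2]
  ring

private theorem F_step [NeZero n] (w : MonoidAlgebra R (Multiplicative (ZMod n)))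
    (hS : Pgeo n v n * w = 0) (k : ℕ) :
    Fc n u v (k + n) * w = Fc n u v k * w := by
  have hxn : (xgen R n) ^ (u * n) = (1 : MonoidAlgebra R (Multiplicative (ZMod n))) := by
    rw [mul_comm, pow_mul, xgen_pow_n, one_pow]
  rcases Nat.eq_zero_or_pos k with rfl | hk
  · have h0 : (Fc n u v 0 : MonoidAlgebra R (Multiplicative (ZMod n))) = 0 := by simp [Fc, Pgeo]
    have hn : (Fc n u v n : MonoidAlgebra R (Multiplicative (ZMod n))) * w = 0 := by
      unfold Fc
      rw [mul_assoc, hS, mul_zero]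
    rw [zero_add, hn, h0, zero_mul]
  · obtain ⟨k', rfl⟩ := Nat.exists_eq_add_of_lt hk
    simp only [zero_add]
    unfold Fc
    rw [Pgeo_add]
    have h1 : k' + 1 + n - 1 = k' + n := by omega
    have h2 : k' + 1 - 1 = k' := by omega
    rw [h1, h2]
    have h3 : (xgen R n : MonoidAlgebra R (Multiplicative (ZMod n))) ^ (u * (k' + n)) =
        xgen R n ^ (u * k') := by
      rw [show u * (k' + n) = u * k' + u * n from by ring, pow_add, hxn, mul_one]
    rw [h3, mul_add, add_mul]
    have h4 : (xgen R n : MonoidAlgebra R (Multiplicative (ZMod n))) ^ (u * k') *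
        (xgen R n ^ (v * (k' + 1)) * Pgeo n v n) * w =
        xgen R n ^ (u * k') * xgen R n ^ (v * (k' + 1)) * (Pgeo n v n * w) := by ring
    rw [h4, hS, mul_zero, add_zero]

private theorem of_eq_pow (g : Multiplicative (ZMod n)) [NeZero n] :
    MonoidAlgebra.of R (Multiplicative (ZMod n)) g = xgen R n ^ (Multiplicative.toAdd g).val := by
  rw [xgen_pow, MonoidAlgebra.of_apply]
  congr 1
  rw [ZMod.natCast_rightInverse (Multiplicative.toAdd g), ofAdd_toAdd]

section Key

variable [NeZero n]
  (σ τ : MonoidAlgebra R (Multiplicative (ZMod n)) →ₐ[R] MonoidAlgebra R (Multiplicative (ZMod n)))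
  (D : MonoidAlgebra R (Multiplicative (ZMod n)) →ₗ[R] MonoidAlgebra R (Multiplicative (ZMod n)))

private theorem key
    (hσ : σ (xgen R n) = xgen R n ^ u) (hτ : τ (xgen R n) = xgen R n ^ (u + v))
    (hD1 : D 1 = 0)
    (hrel : ∀ k : ℕ, 1 ≤ k → k ≤ n - 1 →
      D (xgen R n ^ k) =
        (∑ p ∈ Finset.HasAntidiagonal.antidiagonal (k - 1), σ (xgen R n) ^ p.1 * τ (xgen R n) ^ p.2) *
          D (xgen R n))
    (hS : Pgeo n v n * D (xgen R n) = 0) :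
    ∀ k, D (xgen R n ^ k) = Fc n u v k * D (xgen R n) := by
  intro k
  induction k using Nat.strong_induction_on with
  | _ k ih =>
    rcases Nat.lt_or_ge k n with hk | hk
    · rcases Nat.eq_zero_or_pos k with rfl | hk1
      · simp [Fc, Pgeo, hD1]
      · rw [hrel k hk1 (by omega), hσ, hτ]
        obtain ⟨m, rfl⟩ := Nat.exists_eq_add_of_lt hk1
        simp only [zero_add, Nat.add_sub_cancel]
        congr 1
        exact antid n u v m
    · have hn : 0 < n := Nat.pos_of_ne_zero (NeZero.ne n)
      have hlt : k - n < k := by omega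
      have hxk : (xgen R n) ^ k = xgen R n ^ (k - n) := by
        conv_lhs => rw [show k = (k - n) + n from by omega]
        rw [pow_add, xgen_pow_n, mul_one]
      rw [hxk, ih _ hlt, ← F_step n u v _ hS (k - n), show k - n + n = k from by omega]

private theorem powcase
    (hσ : σ (xgen R n) = xgen R n ^ u) (hτ : τ (xgen R n) = xgen R n ^ (u + v))
    (hD1 : D 1 = 0)
    (hrel : ∀ k : ℕ, 1 ≤ k → k ≤ n - 1 →
      D (xgen R n ^ k) =
        (∑ p ∈ Finset.HasAntidiagonal.antidiagonal (k - 1), σ (xgen R n) ^ p.1 * τ (xgen R n) ^ p.2) *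
          D (xgen R n))
    (hS : Pgeo n v n * D (xgen R n) = 0) (a b : ℕ) :
    D (xgen R n ^ a * xgen R n ^ b) =
      D (xgen R n ^ a) * τ (xgen R n ^ b) + σ (xgen R n ^ a) * D (xgen R n ^ b) := by
  have hk := key n u v σ τ D hσ hτ hD1 hrel hS
  rw [← pow_add, hk, hk, hk, map_pow, map_pow, hσ, hτ, ← pow_mul, ← pow_mul, cocycle]
  ring

end Key

end Aux

/-- Let `σ, τ` be the `R`-algebra endomorphisms of the group ring of
`⟨x | x^n = 1⟩` with `σ x = x^u`, `τ x = x^{u+v}` (`u, v < n`). An `R`-linear map `D`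
with `D 1 = 0` satisfying `D (x^k) = (Σ_{i+j=k−1} σ(x)^i τ(x)^j) D x` for
`k ∈ {1,…,n−1}` is a `(σ,τ)`-derivation iff `(Σ_{i=0}^{n−1} x^{iv}) D x = 0`. -/
theorem stmt10 {R : Type*} [CommRing R] (n u v : ℕ) [NeZero n]
    (hu : u < n) (hv : v < n)
    (σ τ : MonoidAlgebra R (Multiplicative (ZMod n)) →ₐ[R] MonoidAlgebra R (Multiplicative (ZMod n)))
    (hσ : σ (xgen R n) = xgen R n ^ u) (hτ : τ (xgen R n) = xgen R n ^ (u + v))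
    (D : MonoidAlgebra R (Multiplicative (ZMod n)) →ₗ[R] MonoidAlgebra R (Multiplicative (ZMod n)))
    (hD1 : D 1 = 0)
    (hrel : ∀ k : ℕ, 1 ≤ k → k ≤ n - 1 →
      D (xgen R n ^ k) =
        (∑ p ∈ Finset.HasAntidiagonal.antidiagonal (k - 1), σ (xgen R n) ^ p.1 * τ (xgen R n) ^ p.2) *
          D (xgen R n)) :
    (∀ a b, D (a * b) = D a * τ b + σ a * D b) ↔
    (∑ i ∈ Finset.range n, xgen R n ^ (i * v)) * D (xgen R n) = 0 := by
  have hSP : (∑ i ∈ Finset.range n, xgen R n ^ (i * v)) = Pgeo n v n :=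
    Finset.sum_congr rfl fun i _ => by rw [mul_comm]
  have hxn : (xgen R n) ^ (u * n) = (1 : MonoidAlgebra R (Multiplicative (ZMod n))) := by
    rw [mul_comm, pow_mul, xgen_pow_n, one_pow]
  constructor
  · intro hder
    have hpow : ∀ k, D (xgen R n ^ k) = Fc n u v k * D (xgen R n) := by
      intro k
      induction k with
      | zero => simp [Fc, Pgeo, hD1]
      | succ k ih =>
        rw [pow_succ, hder, ih, map_pow, hσ, ← pow_mul, hτ, cocycle n u v k 1]
        have h1 : (Fc n u v 1 : MonoidAlgebra R (Multiplicative (ZMod n))) = 1 := by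
          simp [Fc, Pgeo]
        rw [h1]
        ring
    have h0 : (Fc n u v n : MonoidAlgebra R (Multiplicative (ZMod n))) * D (xgen R n) = 0 := by
      rw [← hpow n, xgen_pow_n, hD1]
    rw [hSP]
    have key2 : (xgen R n) ^ u * (xgen R n) ^ (u * (n - 1)) =
        (1 : MonoidAlgebra R (Multiplicative (ZMod n))) := by
      obtain ⟨m, rfl⟩ := Nat.exists_eq_succ_of_ne_zero (NeZero.ne n)
      rw [← pow_add, show u + u * (m + 1 - 1) = u * (m + 1) from by simp; ring]
      exact hxn
    unfold Fc at h0
    calc Pgeo n v n * D (xgen R n)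
        = (xgen R n ^ u * xgen R n ^ (u * (n - 1))) * (Pgeo n v n * D (xgen R n)) := by
          rw [key2, one_mul]
      _ = xgen R n ^ u * (xgen R n ^ (u * (n - 1)) * Pgeo n v n * D (xgen R n)) := by ring
      _ = 0 := by rw [h0, mul_zero]
  · intro hS
    rw [hSP] at hS
    intro a b
    induction a using MonoidAlgebra.induction_on with
    | of g =>
      induction b using MonoidAlgebra.induction_on with
      | of h =>
        rw [of_eq_pow n g, of_eq_pow n h]
        exact powcase n u v σ τ D hσ hτ hD1 hrel hS _ _
      | add b1 b2 h1 h2 =>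
        rw [mul_add, map_add, map_add, map_add, h1, h2]
        ring
      | smul r b hb =>
        rw [mul_smul_comm, map_smul, map_smul, map_smul, hb]
        simp only [smul_add, mul_smul_comm]
    | add a1 a2 h1 h2 =>
      rw [add_mul, map_add, map_add, map_add, h1, h2]
      ring
    | smul r a ha =>
      rw [smul_mul_assoc, map_smul, map_smul, map_smul, ha, smul_add, smul_mul_assoc,
        smul_mul_assoc]
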